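/- If a k-uniform hypergraph on 4m vertices (m ≥ 2) contains no copy of the complete (2m)-uniform hypergraph on 2m+1 vertices (with k = 2m), then it has at most C(4m, 2m) − C(4m, 2m)/(2m+1) = C(4m, 2m−1) hyperedges. -/

import Mathlib

/-- If a `2m`-uniform hypergraph on `4m` vertices (`m ≥ 2`) contains no copy of
the complete `2m`-uniform hypergraph on `2m+1` vertices, then it has at most
`C(4m,2m) - C(4m,2m)/(2m+1) = C(4m,2m-1)` hyperedges. -/
theorem stmt3 (m : ℕ) (hm : 2 ≤ m)
    (G : Finset (Finset (Fin (4 * m))))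
    (hGk : ∀ B ∈ G, B.card = 2 * m)
    (hfree : ∀ L : Finset (Fin (4 * m)), L.card = 2 * m + 1 →
      ∃ B ⊆ L, B.card = 2 * m ∧ B ∉ G) :
    G.card ≤ (4 * m).choose (2 * m) - (4 * m).choose (2 * m) / (2 * m + 1) ∧
    (4 * m).choose (2 * m) - (4 * m).choose (2 * m) / (2 * m + 1)
      = (4 * m).choose (2 * m - 1) := by
  have h2m1 : 0 < 2 * m + 1 := Nat.succ_pos _
  have h2m : 0 < 2 * m := by omega
  set C := (4 * m).choose (2 * m) with hC
  set D := (4 * m).choose (2 * m - 1) with hD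
  -- identity: C * (2m) = D * (2m+1)
  have hid : C * (2 * m) = D * (2 * m + 1) := by
    have := Nat.choose_succ_right_eq (4 * m) (2 * m - 1)
    have h1 : 2 * m - 1 + 1 = 2 * m := by omega
    have h2 : 4 * m - (2 * m - 1) = 2 * m + 1 := by omega
    rw [h1, h2] at this
    rw [hC, hD, this]
  have hDC : D ≤ C := by
    have : D * (2 * m) ≤ C * (2 * m) := by
      rw [hid]; exact Nat.mul_le_mul_left D (by omega)
    exact Nat.le_of_mul_le_mul_right this h2m
  have hmulCD : (C - D) * (2 * m + 1) = C := by
    rw [Nat.sub_mul]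
    have : C * (2 * m + 1) = C * (2 * m) + C := by ring
    omega
  have hdiv : C / (2 * m + 1) = C - D := by
    conv_lhs => rw [← hmulCD]
    exact Nat.mul_div_cancel (C - D) h2m1
  -- the missing family
  set M : Finset (Finset (Fin (4 * m))) :=
    (Finset.univ.powersetCard (2 * m)) \ G with hM
  have hGsub : G ⊆ Finset.univ.powersetCard (2 * m) := by
    intro B hB
    simp [Finset.mem_powersetCard, hGk B hB]
  have hcardM : G.card + M.card = C := by
    rw [hM, Finset.card_sdiff_of_subset hGsub, hC]
    have hple : G.card ≤ (Finset.univ.powersetCard (2 * m) : Finset (Finset (Fin (4 * m)))).card :=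
      Finset.card_le_card hGsub
    have hpc : (Finset.univ.powersetCard (2 * m) : Finset (Finset (Fin (4 * m)))).card
        = (4 * m).choose (2 * m) := by
      simp [Finset.card_powersetCard]
    omega
  -- double counting
  have key : (4 * m).choose (2 * m + 1) ≤ M.card * (2 * m) := by
    have step1 : (4 * m).choose (2 * m + 1)
        ≤ ∑ L ∈ Finset.univ.powersetCard (2 * m + 1),
            ((M.filter (fun B => B ⊆ L)).card) := by
      have hcard : (Finset.univ.powersetCard (2 * m + 1) : Finset (Finset (Fin (4 * m)))).card
          = (4 * m).choose (2 * m + 1) := by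
        simp [Finset.card_powersetCard]
      rw [← hcard, Finset.card_eq_sum_ones]
      apply Finset.sum_le_sum
      intro L hL
      have hLcard : L.card = 2 * m + 1 := (Finset.mem_powersetCard.1 hL).2
      obtain ⟨B, hBL, hBcard, hBG⟩ := hfree L hLcard
      have hBM : B ∈ M := by
        rw [hM, Finset.mem_sdiff]
        exact ⟨Finset.mem_powersetCard.2 ⟨Finset.subset_univ B, hBcard⟩, hBG⟩
      have : B ∈ M.filter (fun B => B ⊆ L) := Finset.mem_filter.2 ⟨hBM, hBL⟩
      exact Finset.card_pos.2 ⟨B, this⟩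
    have step2 : ∑ L ∈ Finset.univ.powersetCard (2 * m + 1),
            ((M.filter (fun B => B ⊆ L)).card)
        = ∑ B ∈ M,
            (((Finset.univ.powersetCard (2 * m + 1)).filter (fun L => B ⊆ L)).card) := by
      simp only [Finset.card_filter]
      rw [Finset.sum_comm]
    have step3 : ∀ B ∈ M,
        (((Finset.univ.powersetCard (2 * m + 1)).filter (fun L => B ⊆ L)).card) ≤ 2 * m := by
      intro B hB
      have hBcard : B.card = 2 * m :=
        (Finset.mem_powersetCard.1 (Finset.mem_sdiff.1 hB).1).2
      have hle : (((Finset.univ.powersetCard (2 * m + 1)).filter (fun L => B ⊆ L)).card)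
          ≤ ((Finset.univ \ B).powersetCard 1).card := by
        apply Finset.card_le_card_of_injOn (fun L => L \ B)
        · intro L hL
          rw [Finset.mem_coe, Finset.mem_filter, Finset.mem_powersetCard] at hL
          obtain ⟨⟨-, hLcard⟩, hBL⟩ := hL
          rw [Finset.mem_coe, Finset.mem_powersetCard]
          constructor
          · intro x hx
            rw [Finset.mem_sdiff] at hx ⊢
            exact ⟨Finset.mem_univ x, hx.2⟩
          · rw [Finset.card_sdiff_of_subset hBL, hLcard, hBcard]
            omega
        · intro L1 h1 L2 h2 he
          rw [Finset.mem_coe, Finset.mem_filter] at h1 h2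
          have e1 : B ∪ (L1 \ B) = L1 := Finset.union_sdiff_of_subset h1.2
          have e2 : B ∪ (L2 \ B) = L2 := Finset.union_sdiff_of_subset h2.2
          have he' : L1 \ B = L2 \ B := he
          rw [← e1, ← e2, he']
      have hcard2 : ((Finset.univ \ B).powersetCard 1).card = 2 * m := by
        rw [Finset.card_powersetCard, Finset.card_sdiff_of_subset (Finset.subset_univ B),
          Finset.card_univ, Fintype.card_fin, hBcard, Nat.choose_one_right]
        omega
      omega
    calc (4 * m).choose (2 * m + 1)
        ≤ ∑ B ∈ M,
            (((Finset.univ.powersetCard (2 * m + 1)).filter (fun L => B ⊆ L)).card) := by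
          rw [← step2]; exact step1
      _ ≤ ∑ _B ∈ M, 2 * m := Finset.sum_le_sum step3
      _ = M.card * (2 * m) := by rw [Finset.sum_const, smul_eq_mul]
  -- convert to lower bound on M.card
  have hid2 : (4 * m).choose (2 * m + 1) * (2 * m + 1) = C * (2 * m) := by
    have := Nat.choose_succ_right_eq (4 * m) (2 * m)
    have h2 : 4 * m - 2 * m = 2 * m := by omega
    rw [h2] at this
    rw [hC, this]
  have hMge : C - D ≤ M.card := by
    have h1 : C * (2 * m) ≤ M.card * (2 * m) * (2 * m + 1) := by
      calc C * (2 * m) = (4 * m).choose (2 * m + 1) * (2 * m + 1) := hid2.symm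
        _ ≤ M.card * (2 * m) * (2 * m + 1) := Nat.mul_le_mul_right _ key
    have h2 : C ≤ (2 * m + 1) * M.card := by
      have h3 : C * (2 * m) ≤ ((2 * m + 1) * M.card) * (2 * m) := by nlinarith
      exact Nat.le_of_mul_le_mul_right h3 h2m
    have h4 : C / (2 * m + 1) ≤ ((2 * m + 1) * M.card) / (2 * m + 1) :=
      Nat.div_le_div_right h2
    rw [Nat.mul_div_cancel_left M.card h2m1] at h4
    rw [← hdiv]
    exact h4
  constructor
  · rw [hdiv]; omega
  · rw [hdiv]; omega
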